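/- Let T♭_k and T♯_k (k ≥ 0) be the iterates T_0 = T♭, T_{k+1} = T_k⊗T_k and T_0 = T♯, T_{k+1} = T_k⊗T_k, respectively. Then for every integer k ≥ 0: α(T♭_k) = k+2, β(T♭_k) = 3·2^k−1, δ(T♭_k) = 3·2^k+k+1, g(T♭_k) = 3·2^k, n(T♭_k) = (9/2)·4^k+(9/2)·2^k; and α(T♯_k) = k+2, β(T♯_k) = 6·2^k−1, δ(T♯_k) = 6·2^k+k+1, g(T♯_k) = 6·2^k, n(T♯_k) = 18·4^k+3·2^k. -/

import Mathlib

/-- The three-letter alphabet `S = {0, 1, ∗}`. -/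
inductive Tern | zero | one | star
deriving DecidableEq, Repr

/-- A string over `S`. -/
abbrev Str := List Tern

/-- A (ordered) list of strings over `S`. -/
abbrev SList := List Str

/-- `clash x y` is true iff both `x, y ∈ {0,1}` and `x ≠ y`. -/
def clash : Tern → Tern → Bool
  | Tern.zero, Tern.one => true
  | Tern.one, Tern.zero => true
  | _, _ => false

/-- `dist u v`: the number of positions where both letters are binary and differ. -/
def distS (u v : Str) : ℕ := (u.zip v).countP (fun p => clash p.1 p.2)

/-- all strings of a list have length `m` -/
def uniform (L : SList) (m : ℕ) : Prop := ∀ s ∈ L, s.length = m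

/-- A list is `k`-neighborly if any two entries occupying distinct positions `u, v`
satisfy `1 ≤ dist(u,v) ≤ k`. -/
def kNbr (k : ℕ) (L : SList) : Prop :=
  L.Pairwise (fun u v => 1 ≤ distS u v ∧ distS u v ≤ k)

/-- The pairing `A ⊖ B`: entrywise concatenation of strings. -/
def pairL (A B : SList) : SList := List.zipWith (· ++ ·) A B

/-- The concatenation `AB = [v_i w_j]`, ordered lexicographically in `(i,j)`. -/
def concL (A B : SList) : SList := A.flatMap (fun u => B.map (fun v => u ++ v))

/-- the string `∗^m` of `m` jokers -/
def stars (m : ℕ) : Str := List.replicate m Tern.star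

/-- A triple of lists `T = (A,B,C)` together with the (intended common) string
lengths `a` of the entries of `A` and `b` of the entries of `B` (and `C`). -/
structure Triple where
  a : ℕ
  b : ℕ
  A : SList
  B : SList
  C : SList

namespace Triple

/-- `α(T)`: the common length of the strings of `A`. -/
def alpha (T : Triple) : ℕ := T.a

/-- `β(T)`: the common length of the strings of `B`. -/
def beta (T : Triple) : ℕ := T.b

/-- `δ(T) = α(T) + β(T)`. -/
def delta (T : Triple) : ℕ := T.a + T.b

/-- `n(T) = |A|`. -/
def nT (T : Triple) : ℕ := T.A.length

/-- `g(T) = |C|`. -/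
def gT (T : Triple) : ℕ := T.C.length

/-- A triple `T = (A,B,C)` is nice if: (1) `dist(u,v) ≤ 1` for all entries `u,v` of `A`;
(2) `|A| = |B|` and `A ⊖ B` is 2-neighborly; (3) `C` is a 1-neighborly sublist of `B`,
and `dist(u,v) ≤ 1` for every entry `u` of `B` and every entry `v` of `C`.
(The strings of `A` all have length `α(T)` and those of `B` length `β(T)`.) -/
def Nice (T : Triple) : Prop :=
  uniform T.A T.a ∧ uniform T.B T.b ∧
  (∀ u ∈ T.A, ∀ v ∈ T.A, distS u v ≤ 1) ∧
  T.A.length = T.B.length ∧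
  kNbr 2 (pairL T.A T.B) ∧
  T.C.Sublist T.B ∧ kNbr 1 T.C ∧
  (∀ u ∈ T.B, ∀ v ∈ T.C, distS u v ≤ 1)

/-- `T, T'` are concordant if `α(T) = α(T')` and `dist(u,v) ≤ 1` for all entries
`u, v` of `A + A'`. -/
def Concordant (T T' : Triple) : Prop :=
  T.a = T'.a ∧ ∀ u ∈ T.A ++ T'.A, ∀ v ∈ T.A ++ T'.A, distS u v ≤ 1

/-- The compound `T ⊗ T' = (A'', B'', C'')` where
`A'' = [0]A + [0]A' + (|C|·|C'|)·([1][∗^{α(T)}])`,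
`B'' = [0]B[∗^{β(T')}] + [1][∗^{β(T)}]B' + [∗]CC'`,
`C'' = [0]C[∗^{β(T')}] + [1][∗^{β(T)}]C'`. -/
def compound (T T' : Triple) : Triple where
  a := T.a + 1
  b := T.b + T'.b + 1
  A := (T.A.map (fun u => Tern.zero :: u)) ++ (T'.A.map (fun u => Tern.zero :: u)) ++
       List.replicate (T.C.length * T'.C.length) (Tern.one :: stars T.a)
  B := (T.B.map (fun u => Tern.zero :: (u ++ stars T'.b))) ++
       (T'.B.map (fun u => Tern.one :: (stars T.b ++ u))) ++
       ((concL T.C T'.C).map (fun u => Tern.star :: u))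
  C := (T.C.map (fun u => Tern.zero :: (u ++ stars T'.b))) ++
       (T'.C.map (fun u => Tern.one :: (stars T.b ++ u)))

/-- `T, T'` are congruent if they are concordant, `β(T) = β(T')`, `n(T) = n(T')`
and `g(T) = g(T')`. -/
def Congruent (T T' : Triple) : Prop :=
  Concordant T T' ∧ T.b = T'.b ∧ T.A.length = T'.A.length ∧ T.C.length = T'.C.length

end Triple

namespace Triple

/-- the iterates `T_0 = T`, `T_{k+1} = T_k ⊗ T_k` -/
def iterT (T : Triple) : ℕ → Triple
  | 0 => T
  | k + 1 => compound (iterT T k) (iterT T k)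

end Triple

open Tern in
/-- `G = [0, 1]` -/
def Glist : SList := [[zero], [one]]

open Tern in
/-- `H = [00, 01, 1∗]` -/
def Hlist : SList := [[zero, zero], [zero, one], [one, star]]

open Tern in
/-- `L = [000, 001, 01∗, 1∗∗]` -/
def Llist : SList := [[zero, zero, zero], [zero, zero, one], [zero, one, star], [one, star, star]]

open Tern in
/-- `T♭ = (3·[00] + 3·[01] + 3·[1∗], 3·H, H)`. -/
def Tflat : Triple :=
  ⟨2, 2,
    List.replicate 3 [zero, zero] ++ List.replicate 3 [zero, one] ++
      List.replicate 3 [one, star],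
    (List.replicate 3 Hlist).flatten,
    Hlist⟩

open Tern in
/-- `T♯ = (2·(3·[00] + 3·[01]) + 9·[1∗], 2·([0]H[∗∗]) + 2·([1][∗∗]H) + [∗]HH,
[0]H[∗∗] + [1][∗∗]H)`. -/
def Tsharp : Triple :=
  ⟨2, 5,
    (List.replicate 2 (List.replicate 3 [zero, zero] ++ List.replicate 3 [zero, one])).flatten ++
      List.replicate 9 [one, star],
    (List.replicate 2 (Hlist.map (fun u => zero :: (u ++ [star, star])))).flatten ++
      (List.replicate 2 (Hlist.map (fun u => one :: ([star, star] ++ u)))).flatten ++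
      (concL Hlist Hlist).map (fun u => star :: u),
    Hlist.map (fun u => zero :: (u ++ [star, star])) ++
      Hlist.map (fun u => one :: ([star, star] ++ u))⟩

open Tern in
/-- `T† = (4·[00] + 4·[01] + 4·[1∗], 3·L, L)`. -/
def Tdag : Triple :=
  ⟨2, 3,
    List.replicate 4 [zero, zero] ++ List.replicate 4 [zero, one] ++
      List.replicate 4 [one, star],
    (List.replicate 3 Llist).flatten,
    Llist⟩

open Tern in
/-- `T‡ = (2·[00] + 2·[01] + 3·[00] + 3·[01] + 6·[1∗],
2·([0]G[∗∗]) + 2·([1][∗]H) + [∗]GH, [0]G[∗∗] + [1][∗]H)`. -/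
def Tddag : Triple :=
  ⟨2, 4,
    List.replicate 2 [zero, zero] ++ List.replicate 2 [zero, one] ++
      List.replicate 3 [zero, zero] ++ List.replicate 3 [zero, one] ++
      List.replicate 6 [one, star],
    (List.replicate 2 (Glist.map (fun u => zero :: (u ++ [star, star])))).flatten ++
      (List.replicate 2 (Hlist.map (fun u => one :: (star :: u)))).flatten ++
      (concL Glist Hlist).map (fun u => star :: u),
    Glist.map (fun u => zero :: (u ++ [star, star])) ++
      Hlist.map (fun u => one :: (star :: u))⟩

lemma compound_a (T T' : Triple) : (T.compound T').a = T.a + 1 := rfl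
lemma compound_b (T T' : Triple) : (T.compound T').b = T.b + T'.b + 1 := rfl
lemma compound_n (T T' : Triple) :
    (T.compound T').A.length = T.A.length + T'.A.length + T.C.length * T'.C.length := by
  simp [Triple.compound]; ring
lemma compound_g (T T' : Triple) :
    (T.compound T').C.length = T.C.length + T'.C.length := by
  simp [Triple.compound]

lemma iter_params (T : Triple) (a0 b0 n0 g0 : ℕ)
    (ha : T.a = a0) (hb : T.b = b0 + 1) (hn : T.A.length = n0) (hg : T.C.length = g0) (k : ℕ) :
    (Triple.iterT T k).a = a0 + k ∧
    (Triple.iterT T k).b + 1 = (b0 + 2) * 2 ^ k ∧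
    (Triple.iterT T k).C.length = g0 * 2 ^ k ∧
    ((Triple.iterT T k).A.length : ℚ) =
      (g0 : ℚ) ^ 2 / 2 * (2 ^ k * 2 ^ k) + ((n0 : ℚ) - (g0 : ℚ) ^ 2 / 2) * 2 ^ k := by
  induction k with
  | zero => simp [Triple.iterT, ha, hb, hn, hg]
  | succ k ih =>
    obtain ⟨iha, ihb, ihg, ihn⟩ := ih
    refine ⟨?_, ?_, ?_, ?_⟩
    · rw [Triple.iterT, compound_a, iha]; ring
    · rw [Triple.iterT, compound_b]
      have : (Triple.iterT T k).b + (Triple.iterT T k).b + 1 + 1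
          = ((Triple.iterT T k).b + 1) + ((Triple.iterT T k).b + 1) := by ring
      rw [this, ihb]; ring
    · rw [Triple.iterT, compound_g, ihg]; ring
    · rw [Triple.iterT, compound_n]
      push_cast [ihg]
      rw [ihn]
      push_cast
      ring

open Triple in
/-- For the iterates `T♭_k` of `T♭` and `T♯_k` of `T♯`:
`α(T♭_k) = k+2`, `β(T♭_k) = 3·2^k−1`, `δ(T♭_k) = 3·2^k+k+1`, `g(T♭_k) = 3·2^k`,
`n(T♭_k) = (9/2)·4^k+(9/2)·2^k`; and `α(T♯_k) = k+2`, `β(T♯_k) = 6·2^k−1`,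
`δ(T♯_k) = 6·2^k+k+1`, `g(T♯_k) = 6·2^k`, `n(T♯_k) = 18·4^k+3·2^k`. -/
theorem iter_flat_sharp_params (k : ℕ) :
    alpha (iterT Tflat k) = k + 2 ∧
    beta (iterT Tflat k) = 3 * 2 ^ k - 1 ∧
    delta (iterT Tflat k) = 3 * 2 ^ k + k + 1 ∧
    gT (iterT Tflat k) = 3 * 2 ^ k ∧
    (nT (iterT Tflat k) : ℚ) = 9 / 2 * 4 ^ k + 9 / 2 * 2 ^ k ∧
    alpha (iterT Tsharp k) = k + 2 ∧
    beta (iterT Tsharp k) = 6 * 2 ^ k - 1 ∧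
    delta (iterT Tsharp k) = 6 * 2 ^ k + k + 1 ∧
    gT (iterT Tsharp k) = 6 * 2 ^ k ∧
    (nT (iterT Tsharp k) : ℚ) = 18 * 4 ^ k + 3 * 2 ^ k := by
  have hf := iter_params Tflat 2 1 9 3 rfl rfl rfl rfl k
  have hs := iter_params Tsharp 2 4 21 6 rfl rfl rfl rfl k
  obtain ⟨hfa, hfb, hfg, hfn⟩ := hf
  obtain ⟨hsa, hsb, hsg, hsn⟩ := hs
  have hfb' : (Triple.iterT Tflat k).b = 3 * 2 ^ k - 1 := by omega
  have hsb' : (Triple.iterT Tsharp k).b = 6 * 2 ^ k - 1 := by omega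
  refine ⟨?_, hfb', ?_, by simpa [Triple.gT] using hfg, ?_, ?_, hsb', ?_, by simpa [Triple.gT] using hsg, ?_⟩
  · simp [Triple.alpha, hfa]; omega
  · have h1 : (1:ℕ) ≤ 3 * 2 ^ k := by have := Nat.one_le_two_pow (n := k); omega
    simp only [Triple.delta, hfa, hfb']; omega
  · rw [Triple.nT, hfn, show (4:ℚ)^k = 2^k*2^k by rw [show (4:ℚ)=2*2 from by norm_num, mul_pow]]; push_cast; ring
  · simp [Triple.alpha, hsa]; omega
  · have h1 : (1:ℕ) ≤ 6 * 2 ^ k := by have := Nat.one_le_two_pow (n := k); omega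
    simp only [Triple.delta, hsa, hsb']; omega
  · rw [Triple.nT, hsn, show (4:ℚ)^k = 2^k*2^k by rw [show (4:ℚ)=2*2 from by norm_num, mul_pow]]; push_cast; ring
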